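/- Let H be a real Hilbert space, let D ⊆ H be a dictionary such that the open ball B(0, r) is contained in conv(D′) for some r > 0, and let f : H → ℝ be L-smooth of order ℓ = 2 and S-strongly convex of order s = 2 (for some L, S > 0) with global minimizer x*. Fix κ ≥ 1, η > 0, τ > 1 and let (x_t)_{t∈ℕ}, (φ_t)_{t∈ℕ} be a BMP trace with parameters (κ, η, τ) for f and D. Then for every ε > 0 and every integer t > N(ε) + (N(ε)+1)·M, one has f(x_t) − f(x*) ≤ ε, where M := τ²·max{κ², η²}·L·diam(D′)²/(r²·S) and N(ε) := max{0, ⌈(1/2)·log_τ(2φ_0²/(r²Sε))⌉} (with N(ε) := 0 when φ_0 = 0). Moreover, ‖x_t − x*‖² ≤ (2/S)·(f(x_t) − f(x*)) for all t, so x_t → x*. -/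

import Mathlib

set_option maxHeartbeats 1000000


open RealInnerProductSpace Pointwise

/-- A BMP trace with parameters `(κ, η, τ)` for the objective `f` (with gradient `f'`) and
dictionary `D`: sequences of iterates `x` and dual gap estimates `φ` such that `φ 0 ≤ 0`,
`⟪∇f (x 0), z⟫ ≥ τ φ 0` on `conv (D ∪ -D)`, and each step is a constrained step, a dual step,
or a full step. -/
def IsBMPTrace {H : Type*} [NormedAddCommGroup H] [InnerProductSpace ℝ H]
    (f : H → ℝ) (f' : H → H) (D : Set H) (κ η τ : ℝ)
    (x : ℕ → H) (φ : ℕ → ℝ) : Prop :=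
  φ 0 ≤ 0 ∧
  (∀ z ∈ convexHull ℝ (D ∪ -D), τ * φ 0 ≤ ⟪f' (x 0), z⟫) ∧
  ∀ t : ℕ,
    -- constrained step
    (∃ (S : Finset H) (g : H), ↑S ⊆ D ∪ -D ∧
      (∃ v ∈ S, ⟪f' (x t), v⟫ ≤ φ t / η) ∧
      g ∈ Submodule.span ℝ (S : Set H) ∧
      (∀ w ∈ Submodule.span ℝ (S : Set H), ⟪g, w⟫ = ⟪f' (x t), w⟫) ∧
      (∃ γ : ℝ, x (t + 1) = x t - γ • g ∧ ∀ γ' : ℝ, f (x (t + 1)) ≤ f (x t - γ' • g)) ∧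
      φ (t + 1) = φ t) ∨
    -- dual step
    ((∀ z ∈ convexHull ℝ (D ∪ -D), φ t ≤ ⟪f' (x t), z⟫) ∧
      x (t + 1) = x t ∧ φ (t + 1) = φ t / τ) ∨
    -- full step
    (∃ v ∈ D ∪ -D, ⟪f' (x t), v⟫ ≤ φ t / κ ∧
      (∃ γ : ℝ, x (t + 1) = x t + γ • v ∧ ∀ γ' : ℝ, f (x (t + 1)) ≤ f (x t + γ' • v)) ∧
      φ (t + 1) = φ t)

/-- Linear convergence of BMP for `L`-smooth, `S`-strongly convex objectives of orders
`ℓ = s = 2`: with `M = τ² max(κ², η²) L diam(D')²/(r² S)` and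
`N(ε) = max 0 ⌈(1/2) log_τ (2 φ₀²/(r² S ε))⌉`, every `t > N(ε) + (N(ε)+1) M` satisfies
`f (x t) - f x* ≤ ε`; moreover `‖x t - x*‖² ≤ (2/S)(f (x t) - f x*)`, so `x t → x*`. -/
theorem stmt_17
    {H : Type*} [NormedAddCommGroup H] [InnerProductSpace ℝ H] [CompleteSpace H]
    (D : Set H) (hDne : D.Nonempty) (hDbdd : Bornology.IsBounded D)
    (r : ℝ) (hr : 0 < r) (hball : Metric.ball (0 : H) r ⊆ convexHull ℝ (D ∪ -D))
    (f : H → ℝ) (f' : H → H) (hdiff : ∀ z, HasGradientAt f (f' z) z)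
    (L S : ℝ) (hL : 0 < L) (hS : 0 < S)
    (hsmooth : ∀ z y : H, f y - f z - ⟪f' z, y - z⟫ ≤ L / 2 * ‖y - z‖ ^ 2)
    (hsc : ∀ z y : H, S / 2 * ‖y - z‖ ^ 2 ≤ f y - f z - ⟪f' z, y - z⟫)
    (xs : H) (hxs : ∀ y, f xs ≤ f y)
    (κ η τ : ℝ) (hκ : 1 ≤ κ) (hη : 0 < η) (hτ : 1 < τ)
    (x : ℕ → H) (φ : ℕ → ℝ) (htrace : IsBMPTrace f f' D κ η τ x φ) :
    (∀ ε : ℝ, 0 < ε → ∀ N M : ℝ,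
      N = ((max 0 ⌈(1 / 2 : ℝ) * (Real.log (2 * φ 0 ^ 2 / (r ^ 2 * S * ε)) / Real.log τ)⌉ : ℤ) : ℝ) →
      M = τ ^ 2 * max (κ ^ 2) (η ^ 2) * L * Metric.diam (D ∪ -D) ^ 2 / (r ^ 2 * S) →
      ∀ t : ℕ, N + (N + 1) * M < (t : ℝ) →
      f (x t) - f xs ≤ ε) ∧
    (∀ t : ℕ, ‖x t - xs‖ ^ 2 ≤ 2 / S * (f (x t) - f xs)) ∧
    Filter.Tendsto x Filter.atTop (nhds xs) := by
  
  -- L1 : lower bound on inner products over the hull gives gradient norm bound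
  have L1 : ∀ (g : H) (c : ℝ), (∀ z ∈ convexHull ℝ (D ∪ -D), c ≤ ⟪g, z⟫) → r * ‖g‖ ≤ -c := by
    intro g c hc
    have hc0 : c ≤ 0 := by
      have h0 : (0:H) ∈ Metric.ball (0:H) r := by simp [hr]
      simpa using hc 0 (hball h0)
    rcases eq_or_ne g 0 with hg | hg
    · simp [hg]; linarith
    · by_contra hcon
      push_neg at hcon
      have hng : 0 < ‖g‖ := norm_pos_iff.mpr hg
      have hdr : -c / ‖g‖ < r := by rw [div_lt_iff₀ hng]; linarith
      set s : ℝ := (-c / ‖g‖ + r) / 2 with hs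
      have hs1 : -c / ‖g‖ < s := by simp only [hs]; linarith
      have hs2 : s < r := by simp only [hs]; linarith
      have hs0 : 0 ≤ s := by
        have : (0:ℝ) ≤ -c / ‖g‖ := by
          apply div_nonneg (by linarith) (le_of_lt hng)
        linarith
      have hz : (-(s * ‖g‖⁻¹)) • g ∈ Metric.ball (0:H) r := by
        simp only [Metric.mem_ball, dist_zero_right, norm_smul, Real.norm_eq_abs,
          abs_neg, abs_mul, abs_of_nonneg hs0, abs_of_nonneg (inv_nonneg.mpr (le_of_lt hng))]
        rw [mul_assoc, inv_mul_cancel₀ (ne_of_gt hng), mul_one]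
        exact hs2
      have h2 := hc _ (hball hz)
      rw [real_inner_smul_right, real_inner_self_eq_norm_sq] at h2
      have heq : (-(s * ‖g‖⁻¹)) * ‖g‖^2 = -(s * ‖g‖) := by
        field_simp
      rw [heq] at h2
      have : -c < s * ‖g‖ := by rw [← div_lt_iff₀ hng]; exact hs1
      linarith
  -- basic norm facts about the dictionary
  have hD'bdd : Bornology.IsBounded (D ∪ -D) := hDbdd.union hDbdd.neg
  have hd0 : 0 ≤ Metric.diam (D ∪ -D) := Metric.diam_nonneg
  have hnormle : ∀ v ∈ D ∪ -D, ‖v‖ ≤ Metric.diam (D ∪ -D) := by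
    intro v hv
    have hnv : -v ∈ D ∪ -D := by
      rcases hv with hv | hv
      · right; simpa using hv
      · left; simpa using hv
    have h2 : dist v (-v) ≤ Metric.diam (D ∪ -D) := Metric.dist_le_diam_of_mem hD'bdd hv hnv
    have h3 : dist v (-v) = 2 * ‖v‖ := by
      rw [dist_eq_norm, sub_neg_eq_add]
      rw [show v + v = (2:ℝ) • v by rw [two_smul], norm_smul]
      simp
    have := norm_nonneg v
    linarith [h2, h3 ▸ h2]
  -- L2 : strong convexity bound at the minimizer
  have L2 : ∀ z : H, 2 * S * (f z - f xs) ≤ ‖f' z‖ ^ 2 := by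
    intro z
    have h1 := hsc z xs
    have h2 : -⟪f' z, xs - z⟫ ≤ ‖f' z‖ * ‖xs - z‖ := by
      have := abs_real_inner_le_norm (f' z) (xs - z)
      cases abs_cases (⟪f' z, xs - z⟫) with
      | inl h => linarith [h.1, real_inner_le_norm (f' z) (xs - z), neg_abs_le (⟪f' z, xs - z⟫)]
      | inr h => linarith [h.1]
    nlinarith [sq_nonneg (‖f' z‖ - S * ‖xs - z‖), hS, sq_nonneg (‖xs - z‖)]
  -- L3 : exact line search descent along a direction
  have L3 : ∀ (z v : H) (w : H), (∀ γ' : ℝ, f w ≤ f (z + γ' • v)) →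
      2 * L * ‖v‖ ^ 2 * (f w - f z) ≤ -⟪f' z, v⟫ ^ 2 := by
    intro z v w hls
    rcases eq_or_ne v 0 with hv | hv
    · have := hls 0
      simp only [hv, smul_zero, add_zero] at this
      simp only [hv, inner_zero_right, norm_zero]
      nlinarith [this]
    · have hnv : (0:ℝ) < ‖v‖ := norm_pos_iff.mpr hv
      set γ : ℝ := -⟪f' z, v⟫ / (L * ‖v‖ ^ 2) with hγ
      have h1 := hls γ
      have h2 := hsmooth z (z + γ • v)
      rw [add_sub_cancel_left, real_inner_smul_right, norm_smul] at h2
      have h3 : f (z + γ • v) ≤ f z + γ * ⟪f' z, v⟫ + L / 2 * (γ ^ 2 * ‖v‖ ^ 2) := by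
        have : (‖γ‖ * ‖v‖) ^ 2 = γ ^ 2 * ‖v‖ ^ 2 := by
          rw [mul_pow, Real.norm_eq_abs, sq_abs]
        nlinarith [h2, this]
      have h4 : f z + γ * ⟪f' z, v⟫ + L / 2 * (γ ^ 2 * ‖v‖ ^ 2)
          = f z - ⟪f' z, v⟫ ^ 2 / (2 * L * ‖v‖ ^ 2) := by
        rw [hγ]; field_simp; ring
      have h5 : f w ≤ f z - ⟪f' z, v⟫ ^ 2 / (2 * L * ‖v‖ ^ 2) := by
        rw [← h4]; exact le_trans h1 h3
      have h6 : (0:ℝ) < 2 * L * ‖v‖ ^ 2 := by positivity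
      rw [sub_div' (ne_of_gt h6)] at h5
      calc 2 * L * ‖v‖ ^ 2 * (f w - f z) ≤ 2 * L * ‖v‖ ^ 2 *
            ((f z * (2 * L * ‖v‖ ^ 2) - ⟪f' z, v⟫ ^ 2) / (2 * L * ‖v‖ ^ 2) - f z) := by
            apply mul_le_mul_of_nonneg_left _ (le_of_lt h6)
            linarith
        _ = -⟪f' z, v⟫ ^ 2 := by field_simp; ring
  -- gradient vanishes at the minimizer
  have hgrad0 : f' xs = 0 := by
    by_contra hne
    have ha : (0:ℝ) < ‖f' xs‖ := norm_pos_iff.mpr hne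
    have h1 := hsmooth xs (xs - L⁻¹ • f' xs)
    rw [sub_sub_cancel_left, inner_neg_right, real_inner_smul_right,
      real_inner_self_eq_norm_sq, norm_neg, norm_smul] at h1
    have h2 := hxs (xs - L⁻¹ • f' xs)
    have h3 : (‖(L:ℝ)⁻¹‖ * ‖f' xs‖) ^ 2 = L⁻¹ ^ 2 * ‖f' xs‖ ^ 2 := by
      rw [mul_pow, Real.norm_eq_abs, sq_abs]
    rw [h3] at h1
    have hL' : L⁻¹ > 0 := by positivity
    have h4 : L / 2 * (L⁻¹ ^ 2 * ‖f' xs‖ ^ 2) = L⁻¹ / 2 * ‖f' xs‖ ^ 2 := by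
      field_simp
    rw [h4] at h1
    nlinarith [h1, h2, mul_pos ha ha]
  -- part 2
  have part2 : ∀ z : H, ‖z - xs‖ ^ 2 ≤ 2 / S * (f z - f xs) := by
    intro z
    have h1 := hsc xs z
    rw [hgrad0, inner_zero_left, sub_zero] at h1
    rw [div_mul_eq_mul_div, le_div_iff₀ hS]
    linarith
  obtain ⟨hφ0, hinit, hstep⟩ := htrace
  have hτ0 : (0:ℝ) < τ := by linarith
  have hκ0 : (0:ℝ) < κ := by linarith
  set Kq : ℝ := max (κ ^ 2) (η ^ 2) with hKq
  set dm : ℝ := Metric.diam (D ∪ -D) with hdm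
  have hK1 : (1:ℝ) ≤ Kq := le_trans (by nlinarith : (1:ℝ) ≤ κ ^ 2) (le_max_left _ _)
  have hK0 : (0:ℝ) < Kq := by linarith
  have hKκ : κ ^ 2 ≤ Kq := le_max_left _ _
  have hKη : η ^ 2 ≤ Kq := le_max_right _ _
  have hrS : r ^ 2 * S ≠ 0 := by positivity
  -- step analysis
  have hstep' : ∀ t : ℕ,
      (x (t+1) = x t ∧ φ (t+1) = φ t / τ ∧ 2*r^2*S*(f (x t) - f xs) ≤ (φ t)^2)
    ∨ (φ (t+1) = φ t ∧ f (x (t+1)) ≤ f (x t) ∧ (φ t < 0 →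
        2*L*Kq*dm^2 * (f (x (t+1)) - f (x t)) ≤ -(φ t)^2)) := by
    intro t
    rcases hstep t with hcon | hdual | hfull
    · right
      obtain ⟨Sf, g, hSsub, ⟨v, hvS, hvip⟩, hgspan, hproj, ⟨γ, hx1, hls⟩, hφ1⟩ := hcon
      have hdec : f (x (t+1)) ≤ f (x t) := by simpa using hls 0
      refine ⟨hφ1, hdec, ?_⟩
      intro hφt
      have hip : ⟪f' (x t), v⟫ < 0 :=
        lt_of_le_of_lt hvip (div_neg_of_neg_of_pos hφt hη)
      have hvne : v ≠ 0 := by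
        intro h; rw [h, inner_zero_right] at hip; exact lt_irrefl _ hip
      have hvD : v ∈ D ∪ -D := hSsub hvS
      have hb0 : 0 < ‖v‖ := norm_pos_iff.mpr hvne
      have hbd : ‖v‖ ≤ dm := hnormle v hvD
      have hd : 0 < dm := lt_of_lt_of_le hb0 hbd
      have hgv : ⟪g, v⟫ = ⟪f' (x t), v⟫ := hproj v (Submodule.subset_span hvS)
      have hgg : ⟪f' (x t), g⟫ = ‖g‖^2 := by
        rw [← hproj g hgspan, real_inner_self_eq_norm_sq]
      have hls' : ∀ γ' : ℝ, f (x (t+1)) ≤ f (x t + γ' • g) := by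
        intro γ'; have := hls (-γ'); rwa [neg_smul, sub_neg_eq_add] at this
      have h3 := L3 (x t) g (x (t+1)) hls'
      rw [hgg] at h3
      have hg0 : 0 < ‖g‖ := by
        rcases eq_or_lt_of_le (norm_nonneg g) with h | h
        · exfalso
          have : g = 0 := norm_eq_zero.mp h.symm
          rw [this, inner_zero_left] at hgv
          exact lt_irrefl _ (hgv ▸ hip)
        · exact h
      -- 2 L Δ ≤ -‖g‖²
      have hΔ : 2*L*(f (x (t+1)) - f (x t)) ≤ -‖g‖^2 := by
        nlinarith [h3, mul_pos hg0 hg0, sq_nonneg (‖g‖)]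
      -- -φ t ≤ η ‖g‖ dm
      have hCS : -⟪g, v⟫ ≤ ‖g‖ * ‖v‖ := by
        have := abs_real_inner_le_norm g v
        cases abs_cases (⟪g, v⟫) with
        | inl h => linarith [h.1, neg_abs_le (⟪g, v⟫)]
        | inr h => linarith [h.1]
      have h5 : -φ t / η ≤ ‖g‖ * ‖v‖ := by
        have h5a : -φ t / η ≤ -⟪g, v⟫ := by rw [hgv, neg_div]; linarith [hvip]
        linarith
      have h6 : -φ t ≤ η * (‖g‖ * dm) := by
        rw [div_le_iff₀ hη] at h5
        nlinarith [mul_le_mul_of_nonneg_left hbd (le_of_lt hg0), hη.le, hg0.le]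
      have h7 : (φ t)^2 ≤ Kq * (‖g‖^2 * dm^2) := by
        have h8 : (φ t)^2 ≤ (η * (‖g‖ * dm))^2 := by
          nlinarith [h6, hφt]
        have h9 : (η * (‖g‖ * dm))^2 = η^2 * (‖g‖^2 * dm^2) := by ring
        have h10 : η^2*(‖g‖^2*dm^2) ≤ Kq*(‖g‖^2*dm^2) :=
          mul_le_mul_of_nonneg_right hKη (by positivity)
        linarith [h8, h9, h10]
      calc 2*L*Kq*dm^2 * (f (x (t+1)) - f (x t))
          = Kq*dm^2 * (2*L*(f (x (t+1)) - f (x t))) := by ring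
        _ ≤ Kq*dm^2 * (-‖g‖^2) := by
            apply mul_le_mul_of_nonneg_left hΔ (by positivity)
        _ = -(Kq * (‖g‖^2 * dm^2)) := by ring
        _ ≤ -(φ t)^2 := by linarith [h7]
    · left
      obtain ⟨hz, hx1, hφ1⟩ := hdual
      refine ⟨hx1, hφ1, ?_⟩
      have hg := L1 (f' (x t)) (φ t) hz
      have h1 : (r*‖f' (x t)‖)^2 ≤ (φ t)^2 := by
        nlinarith [hg, mul_nonneg hr.le (norm_nonneg (f' (x t)))]
      linarith [h1, mul_le_mul_of_nonneg_left (L2 (x t)) (sq_nonneg r)]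
    · right
      obtain ⟨v, hvD, hvip, ⟨γ, hx1, hls⟩, hφ1⟩ := hfull
      have hdec : f (x (t+1)) ≤ f (x t) := by simpa using hls 0
      refine ⟨hφ1, hdec, ?_⟩
      intro hφt
      have hip : ⟪f' (x t), v⟫ < 0 :=
        lt_of_le_of_lt hvip (div_neg_of_neg_of_pos hφt hκ0)
      have hvne : v ≠ 0 := by
        intro h; rw [h, inner_zero_right] at hip; exact lt_irrefl _ hip
      have hb0 : 0 < ‖v‖ := norm_pos_iff.mpr hvne
      have hbd : ‖v‖ ≤ dm := hnormle v hvD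
      have hd : 0 < dm := lt_of_lt_of_le hb0 hbd
      have h3 := L3 (x t) v (x (t+1)) hls
      -- p ≤ κ * (-ip)
      have h4 : -φ t ≤ κ * (-⟪f' (x t), v⟫) := by
        rw [le_div_iff₀ hκ0] at hvip
        linarith [hvip]
      have h5 : (φ t)^2 ≤ Kq * ⟪f' (x t), v⟫^2 := by
        have : (φ t)^2 ≤ (κ * (-⟪f' (x t), v⟫))^2 := by nlinarith [h4, hφt]
        nlinarith [this, hKκ, sq_nonneg (⟪f' (x t), v⟫)]
      -- multiply goal by ‖v‖² > 0
      have hb2 : (0:ℝ) < ‖v‖^2 := by positivity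
      rw [← mul_le_mul_iff_of_pos_right hb2]
      have hΔ0 : f (x (t+1)) - f (x t) ≤ 0 := by linarith
      calc 2*L*Kq*dm^2 * (f (x (t+1)) - f (x t)) * ‖v‖^2
          = Kq*dm^2 * (2*L*‖v‖^2*(f (x (t+1)) - f (x t))) := by ring
        _ ≤ Kq*dm^2 * (-⟪f' (x t), v⟫^2) := by
            apply mul_le_mul_of_nonneg_left h3 (by positivity)
        _ = -(Kq * ⟪f' (x t), v⟫^2) * dm^2 := by ring
        _ ≤ -(φ t)^2 * dm^2 := by
            linarith [mul_le_mul_of_nonneg_right h5 (sq_nonneg dm)]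
        _ ≤ -(φ t)^2 * ‖v‖^2 := by
            have hsq : ‖v‖^2 ≤ dm^2 := by nlinarith [hbd, hb0]
            linarith [mul_le_mul_of_nonneg_right hsq (sq_nonneg (φ t))]
  -- sign of φ
  have hφle : ∀ t, φ t ≤ 0 := by
    intro t
    induction t with
    | zero => exact hφ0
    | succ t ih =>
      rcases hstep' t with ⟨_, hφ1, _⟩ | ⟨hφ1, _, _⟩
      · rw [hφ1]; exact div_nonpos_iff.mpr (Or.inr ⟨ih, hτ0.le⟩)
      · rw [hφ1]; exact ih
  -- invariant A
  have hA : ∀ t, 2*r^2*S*(f (x t) - f xs) ≤ τ^2 * (φ t)^2 := by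
    intro t
    induction t with
    | zero =>
      have hg := L1 (f' (x 0)) (τ * φ 0) hinit
      have h1 : (r*‖f' (x 0)‖)^2 ≤ (τ * φ 0)^2 := by
        nlinarith [hg, mul_nonneg hr.le (norm_nonneg (f' (x 0)))]
      linarith [h1, mul_le_mul_of_nonneg_left (L2 (x 0)) (sq_nonneg r)]
    | succ t ih =>
      rcases hstep' t with ⟨hx1, hφ1, hb⟩ | ⟨hφ1, hdec, _⟩
      · rw [hx1, hφ1]
        have hid : τ^2 * (φ t / τ)^2 = (φ t)^2 := by
          field_simp
        rw [hid]; exact hb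
      · rw [hφ1]
        refine le_trans ?_ ih
        have := mul_le_mul_of_nonneg_left (show f (x (t+1)) - f xs ≤ f (x t) - f xs by linarith [hdec])
          (show (0:ℝ) ≤ 2*r^2*S by positivity)
        linarith [this]
  -- the M constant
  have hMval0 : (0:ℝ) ≤ τ^2*Kq*L*dm^2/(r^2*S) := by positivity
  -- main estimate (part 1)
  have part1 : ∀ ε : ℝ, 0 < ε → ∀ N M : ℝ,
      N = ((max 0 ⌈(1 / 2 : ℝ) * (Real.log (2 * φ 0 ^ 2 / (r ^ 2 * S * ε)) / Real.log τ)⌉ : ℤ) : ℝ) →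
      M = τ ^ 2 * Kq * L * dm ^ 2 / (r ^ 2 * S) →
      ∀ t : ℕ, N + (N + 1) * M < (t : ℝ) → f (x t) - f xs ≤ ε := by
    intro ε hε N M hN hM t ht
    rcases lt_or_eq_of_le hφ0 with hneg | hzero
    swap
    · -- φ 0 = 0 : the gap is always zero
      have hφz : ∀ s, φ s = 0 := by
        intro s
        induction s with
        | zero => exact hzero
        | succ s ih =>
          rcases hstep' s with ⟨_, hφ1, _⟩ | ⟨hφ1, _, _⟩
          · rw [hφ1, ih]; simp
          · rw [hφ1, ih]
      have := hA t
      rw [hφz t] at this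
      have hpos : (0:ℝ) < 2*r^2*S := by positivity
      have h2 : (2*r^2*S) * (f (x t) - f xs) ≤ (2*r^2*S) * 0 := by
        rw [mul_zero]; linarith [this]
      have h3 := le_of_mul_le_mul_left h2 hpos
      linarith [hε, h3]
    · -- φ 0 < 0
      have hφlt : ∀ s, φ s < 0 := by
        intro s
        induction s with
        | zero => exact hneg
        | succ s ih =>
          rcases hstep' s with ⟨_, hφ1, _⟩ | ⟨hφ1, _, _⟩
          · rw [hφ1]; exact div_neg_of_neg_of_pos ih hτ0
          · rw [hφ1]; exact ih
      -- invariant J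
      have hJ : ∀ s : ℕ, ∃ k n : ℕ, s = k + n ∧ φ s = φ 0 / τ ^ k ∧
          2*L*Kq*dm^2*(f (x s) - f xs) ≤ (((k:ℝ)+1)*M - n) * (φ s)^2 := by
        intro s
        induction s with
        | zero =>
          refine ⟨0, 0, rfl, by simp, ?_⟩
          push_cast
          have hmul := mul_le_mul_of_nonneg_left (hA 0)
            (show (0:ℝ) ≤ L*Kq*dm^2/(r^2*S) by positivity)
          have e1 : L*Kq*dm^2/(r^2*S) * (2*r^2*S*(f (x 0) - f xs))
              = 2*L*Kq*dm^2*(f (x 0) - f xs) := by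
            field_simp
          have e2 : L*Kq*dm^2/(r^2*S) * (τ^2 * (φ 0)^2)
              = ((0:ℝ)+1)*M*(φ 0)^2 - 0 := by
            rw [hM]; field_simp; ring
          rw [e1, e2] at hmul
          linarith [hmul]
        | succ s ih =>
          obtain ⟨k, n, hskn, hφk, hbd⟩ := ih
          have hφs2 : (0:ℝ) < (φ s)^2 := by
            rw [pow_two]; exact mul_pos_of_neg_of_neg (hφlt s) (hφlt s)
          have hh0 : 0 ≤ f (x s) - f xs := by linarith [hxs (x s)]
          have hLK0 : (0:ℝ) ≤ 2*L*Kq*dm^2 := by positivity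
          have hnM : (n:ℝ) ≤ ((k:ℝ)+1)*M := by
            have h0 : 0 ≤ (((k:ℝ)+1)*M - n) * (φ s)^2 :=
              le_trans (mul_nonneg hLK0 hh0) hbd
            by_contra hcon
            push_neg at hcon
            exact absurd h0 (not_le.mpr (mul_neg_of_neg_of_pos (by linarith) hφs2))
          rcases hstep' s with ⟨hx1, hφ1, hb⟩ | ⟨hφ1, hdec, himp⟩
          · refine ⟨k+1, n, by omega, ?_, ?_⟩
            · rw [hφ1, hφk, pow_succ, div_div]
            · rw [hφ1, hx1]
              have h1 : 2*L*Kq*dm^2*(f (x s) - f xs) ≤ M * (φ s / τ)^2 := by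
                have hmul := mul_le_mul_of_nonneg_left hb
                  (show (0:ℝ) ≤ L*Kq*dm^2/(r^2*S) by positivity)
                have e1 : L*Kq*dm^2/(r^2*S) * (2*r^2*S*(f (x s) - f xs))
                    = 2*L*Kq*dm^2*(f (x s) - f xs) := by field_simp
                have e2 : L*Kq*dm^2/(r^2*S) * (φ s)^2 = M * (φ s / τ)^2 := by
                  rw [hM]; field_simp
                rw [e1, e2] at hmul
                exact hmul
              have h2 : M * (φ s / τ)^2 ≤ (((k:ℝ)+1+1)*M - n) * (φ s / τ)^2 := by
                apply mul_le_mul_of_nonneg_right _ (sq_nonneg _)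
                linarith [hnM]
              push_cast
              calc 2*L*Kq*dm^2*(f (x s) - f xs) ≤ M * (φ s / τ)^2 := h1
                _ ≤ (((k:ℝ)+1+1)*M - n) * (φ s / τ)^2 := h2
          · obtain hkey := himp (hφlt s)
            refine ⟨k, n+1, by omega, by rw [hφ1]; exact hφk, ?_⟩
            rw [hφ1]
            push_cast
            linarith [hbd, hkey]
      obtain ⟨k, n, htkn, hφk, hbd⟩ := hJ t
      have hφt2 : (0:ℝ) < (φ t)^2 := by
        rw [pow_two]; exact mul_pos_of_neg_of_neg (hφlt t) (hφlt t)
      have hh0 : 0 ≤ f (x t) - f xs := by linarith [hxs (x t)]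
      have hLK0 : (0:ℝ) ≤ 2*L*Kq*dm^2 := by positivity
      have hnM : (n:ℝ) ≤ ((k:ℝ)+1)*M := by
        have h0 : 0 ≤ (((k:ℝ)+1)*M - n) * (φ t)^2 :=
          le_trans (mul_nonneg hLK0 hh0) hbd
        by_contra hcon
        push_neg at hcon
        exact absurd h0 (not_le.mpr (mul_neg_of_neg_of_pos (by linarith) hφt2))
      have hM0 : (0:ℝ) ≤ M := by rw [hM]; exact hMval0
      -- N is a nonnegative integer
      have hNz0 : (0:ℤ) ≤ max 0 ⌈(1 / 2 : ℝ) * (Real.log (2 * φ 0 ^ 2 / (r ^ 2 * S * ε)) / Real.log τ)⌉ :=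
        le_max_left _ _
      obtain ⟨m, hmz⟩ : ∃ m : ℕ,
          (max 0 ⌈(1 / 2 : ℝ) * (Real.log (2 * φ 0 ^ 2 / (r ^ 2 * S * ε)) / Real.log τ)⌉ : ℤ) = (m:ℤ) :=
        ⟨_, (Int.toNat_of_nonneg hNz0).symm⟩
      have hNm : N = (m : ℝ) := by rw [hN, hmz]; norm_num
      have hN0 : (0:ℝ) ≤ N := by rw [hNm]; positivity
      -- k is at least m + 1
      have hkN : N < (k:ℝ) := by
        by_contra hcon
        push_neg at hcon
        have htle : (t:ℝ) ≤ N + (N+1)*M := by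
          have h1 : (t:ℝ) = (k:ℝ) + n := by rw [htkn]; push_cast; ring
          have h2 : ((k:ℝ)+1)*M ≤ (N+1)*M :=
            mul_le_mul_of_nonneg_right (by linarith [hcon]) hM0
          linarith [hnM, h1, h2, hcon]
        linarith [ht]
      have hmk : m + 1 ≤ k := by
        rw [hNm] at hkN
        exact_mod_cast Nat.succ_le_of_lt (by exact_mod_cast hkN)
      -- the key logarithmic estimate
      have hX0 : (0:ℝ) < 2 * φ 0 ^ 2 / (r ^ 2 * S * ε) := by
        have : (0:ℝ) < φ 0 ^ 2 := by
          rw [pow_two]; exact mul_pos_of_neg_of_neg hneg hneg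
        positivity
      have hlogτ : 0 < Real.log τ := Real.log_pos hτ
      have hXm : 2 * φ 0 ^ 2 / (r ^ 2 * S * ε) ≤ τ ^ (2*m) := by
        have hc := Int.le_ceil ((1 / 2 : ℝ) * (Real.log (2 * φ 0 ^ 2 / (r ^ 2 * S * ε)) / Real.log τ))
        have hcm : ((⌈(1 / 2 : ℝ) * (Real.log (2 * φ 0 ^ 2 / (r ^ 2 * S * ε)) / Real.log τ)⌉ : ℝ)) ≤ (m:ℝ) := by
          have : (⌈(1 / 2 : ℝ) * (Real.log (2 * φ 0 ^ 2 / (r ^ 2 * S * ε)) / Real.log τ)⌉ : ℤ) ≤ (m:ℤ) := by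
            rw [← hmz]
            exact le_max_right _ _
          exact_mod_cast this
        have hlog : Real.log (2 * φ 0 ^ 2 / (r ^ 2 * S * ε)) ≤ ((2*m : ℕ) : ℝ) * Real.log τ := by
          have h1 : (1 / 2 : ℝ) * (Real.log (2 * φ 0 ^ 2 / (r ^ 2 * S * ε)) / Real.log τ) ≤ (m:ℝ) :=
            le_trans hc hcm
          have h2 : Real.log (2 * φ 0 ^ 2 / (r ^ 2 * S * ε)) / Real.log τ ≤ ((2*m : ℕ):ℝ) := by
            push_cast
            linarith [h1]
          exact (div_le_iff₀ hlogτ).mp h2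
        calc 2 * φ 0 ^ 2 / (r ^ 2 * S * ε)
            = Real.exp (Real.log (2 * φ 0 ^ 2 / (r ^ 2 * S * ε))) := (Real.exp_log hX0).symm
          _ ≤ Real.exp (((2*m : ℕ) : ℝ) * Real.log τ) := Real.exp_le_exp.mpr hlog
          _ = τ ^ (2*m) := by
              rw [← Real.log_pow, Real.exp_log (by positivity)]
      have hXb : 2 * φ 0 ^ 2 ≤ r ^ 2 * S * ε * τ ^ (2*m) := by
        rw [div_le_iff₀ (by positivity : (0:ℝ) < r ^ 2 * S * ε)] at hXm
        linarith [hXm]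
      -- combine with invariant A
      have hAt := hA t
      have hφt2e : (φ t)^2 * τ^(2*k) = (φ 0)^2 := by
        rw [hφk, div_pow, show 2*k = k*2 by ring, pow_mul]
        field_simp
      have hC : 2*r^2*S*(f (x t) - f xs) * τ^(2*k) ≤ τ^2 * (φ 0)^2 := by
        have := mul_le_mul_of_nonneg_right hAt (show (0:ℝ) ≤ τ^(2*k) by positivity)
        calc 2*r^2*S*(f (x t) - f xs) * τ^(2*k)
            ≤ τ^2 * (φ t)^2 * τ^(2*k) := this
          _ = τ^2 * ((φ t)^2 * τ^(2*k)) := by ring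
          _ = τ^2 * (φ 0)^2 := by rw [hφt2e]
      have hpowle : τ^(2*m+2) ≤ τ^(2*k) := by
        apply pow_le_pow_right₀ (le_of_lt hτ)
        omega
      have hC2 : 2*r^2*S*(f (x t) - f xs) * τ^(2*m+2) ≤ τ^2 * (φ 0)^2 := by
        have h1 : 2*r^2*S*(f (x t) - f xs) * τ^(2*m+2) ≤ 2*r^2*S*(f (x t) - f xs) * τ^(2*k) := by
          apply mul_le_mul_of_nonneg_left hpowle
          positivity
        linarith [hC]
      have hpm : τ^(2*m+2) = τ^(2*m) * τ^2 := by rw [pow_add]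
      have hD : τ^2 * (φ 0)^2 ≤ (τ^2/2) * (r ^ 2 * S * ε * τ ^ (2*m)) := by
        have := mul_le_mul_of_nonneg_left hXb (show (0:ℝ) ≤ τ^2/2 by positivity)
        linarith [this]
      have hfin : 2*(f (x t) - f xs) * (r^2*S*τ^2*τ^(2*m)) ≤ (ε/2) * (r^2*S*τ^2*τ^(2*m)) := by
        rw [hpm] at hC2
        linarith [hC2, hD]
      have hc1 : (0:ℝ) < r^2*S*τ^2*τ^(2*m) := by positivity
      have := le_of_mul_le_mul_right hfin hc1
      linarith [this]
  refine ⟨?_, fun t => part2 (x t), ?_⟩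
  · intro ε hε N M hN hM t ht
    exact part1 ε hε N M hN hM t ht
  · rw [Metric.tendsto_atTop]
    intro ε hε
    have hε' : (0:ℝ) < S*ε^2/8 := by positivity
    obtain ⟨N₀, hN₀⟩ := exists_nat_gt
      (((max 0 ⌈(1 / 2 : ℝ) * (Real.log (2 * φ 0 ^ 2 / (r ^ 2 * S * (S*ε^2/8))) / Real.log τ)⌉ : ℤ) : ℝ) +
        (((max 0 ⌈(1 / 2 : ℝ) * (Real.log (2 * φ 0 ^ 2 / (r ^ 2 * S * (S*ε^2/8))) / Real.log τ)⌉ : ℤ) : ℝ) + 1) *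
          (τ ^ 2 * Kq * L * dm ^ 2 / (r ^ 2 * S)))
    refine ⟨N₀, fun n hn => ?_⟩
    have h1 : f (x n) - f xs ≤ S*ε^2/8 := by
      apply part1 (S*ε^2/8) hε' _ _ rfl rfl n
      calc _ < (N₀ : ℝ) := hN₀
        _ ≤ (n : ℝ) := by exact_mod_cast hn
    have h2 := part2 (x n)
    have h3 : ‖x n - xs‖^2 < ε^2 := by
      have : 2/S * (f (x n) - f xs) ≤ 2/S * (S*ε^2/8) := by
        apply mul_le_mul_of_nonneg_left h1 (by positivity)
      have h4 : 2/S * (S*ε^2/8) = ε^2/4 := by field_simp; ring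
      have h5 : (0:ℝ) < ε^2 := by positivity
      linarith [h2, this, h4, h5]
    rw [dist_eq_norm]
    exact lt_of_pow_lt_pow_left₀ 2 hε.le h3
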